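/- The set of abscissas of local maxima of the Knopp function F on (0,1) is exactly S = { k/2^N + 1/(3·2^N), k/2^N + 2/(3·2^N) : N ∈ ℕ, k ∈ ℕ, with the point in (0,1) }. -/

import Mathlib

open Real MeasureTheory Filter Topology

noncomputable def phi (x : ℝ) : ℝ := |x - round x|

noncomputable def Knopp (α : ℝ) (x : ℝ) : ℝ :=
  ∑' j : ℕ, (2:ℝ) ^ (-(α * (j:ℝ))) * phi ((2:ℝ) ^ j * x)
def inS (x : ℝ) : Prop :=
  (∃ k N : ℕ, x = (k:ℝ)/2^N + 1/(3*2^N) ∨ x = (k:ℝ)/2^N + 2/(3*2^N)) ∧ x ∈ Set.Ioo (0:ℝ) 1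

namespace KnoppPf

lemma phi_nonneg (x : ℝ) : 0 ≤ phi x := abs_nonneg _

lemma phi_le_half (x : ℝ) : phi x ≤ 1/2 := abs_sub_round x

lemma phi_min {t : ℝ} (h0 : 0 ≤ t) (h1 : t ≤ 1) : phi t = min t (1-t) := by
  rcases eq_or_lt_of_le h1 with h | h
  · subst h; rw [phi]; norm_num
  · rw [phi, abs_sub_round_eq_min, Int.fract_eq_self.2 ⟨h0, h⟩]

lemma phi_left {t : ℝ} (h0 : 0 ≤ t) (h1 : t ≤ 1/2) : phi t = t := by
  rw [phi_min h0 (by linarith), min_eq_left (by linarith)]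

lemma phi_right {t : ℝ} (h0 : 1/2 ≤ t) (h1 : t ≤ 1) : phi t = 1 - t := by
  rw [phi_min (by linarith) h1, min_eq_right (by linarith)]

lemma phi_int_add (z : ℤ) (t : ℝ) : phi ((z:ℝ) + t) = phi t := by
  rw [phi, phi, round_intCast_add]
  push_cast
  ring_nf

lemma phi_neg (t : ℝ) : phi (-t) = phi t := by
  rw [phi, phi, abs_sub_round_eq_min, abs_sub_round_eq_min]
  by_cases h : Int.fract t = 0
  · rw [Int.fract_neg_eq_zero.2 h, h]
  · rw [Int.fract_neg h, min_comm]; ring_nf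

lemma phi_lipschitz (s t : ℝ) : |phi s - phi t| ≤ |s - t| := by
  have h1 : phi s ≤ phi t + |s - t| := by
    calc phi s ≤ |s - round t| := round_le s (round t)
    _ = |(s - t) + (t - round t)| := by ring_nf
    _ ≤ |s - t| + |t - round t| := abs_add_le _ _
    _ = phi t + |s - t| := by rw [phi]; ring
  have h2 : phi t ≤ phi s + |s - t| := by
    calc phi t ≤ |t - round s| := round_le t (round s)
    _ = |(t - s) + (s - round s)| := by ring_nf
    _ ≤ |t - s| + |s - round s| := abs_add_le _ _
    _ = phi s + |s - t| := by rw [phi, abs_sub_comm t s]; ring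
  rw [abs_sub_le_iff]; constructor <;> linarith

lemma phi_fract (t : ℝ) : phi t = phi (Int.fract t) := by
  conv_lhs => rw [show t = (⌊t⌋ : ℝ) + Int.fract t by rw [Int.fract]; ring]
  rw [phi_int_add]

lemma phi_add_phi_two (t : ℝ) : phi t + phi (2*t)/2 ≤ 1/2 := by
  have h2 : phi (2*t) = phi (2 * Int.fract t) := by
    conv_lhs => rw [show 2*t = ((2*⌊t⌋ : ℤ) : ℝ) + 2 * Int.fract t by push_cast [Int.fract]; ring]
    rw [phi_int_add]
  rw [phi_fract t, h2]
  set f := Int.fract t with hf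
  have h0 : 0 ≤ f := Int.fract_nonneg t
  have h1 : f < 1 := Int.fract_lt_one t
  rcases le_or_gt f (1/4) with hc | hc
  · rw [phi_left h0 (by linarith)]
    have : phi (2*f) ≤ 2*f := by
      rw [phi_min (by linarith) (by linarith)]; exact min_le_left _ _
    linarith
  · rcases le_or_gt f (1/2) with hd | hd
    · rw [phi_left h0 hd]
      have : phi (2*f) ≤ 1 - 2*f := by
        rw [phi_min (by linarith) (by linarith)]; exact min_le_right _ _
      linarith
    · have hph : phi (2*f) = phi (2*f - 1) := by
        conv_lhs => rw [show 2*f = ((1:ℤ):ℝ) + (2*f - 1) by push_cast; ring]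
        rw [phi_int_add]
      rcases le_or_gt f (3/4) with he | he
      · rw [phi_right (by linarith) (by linarith), hph]
        have : phi (2*f-1) ≤ 2*f - 1 := by
          rw [phi_min (by linarith) (by linarith)]; exact min_le_left _ _
        linarith
      · rw [phi_right (by linarith) (by linarith), hph]
        have : phi (2*f-1) ≤ 1 - (2*f-1) := by
          rw [phi_min (by linarith) (by linarith)]; exact min_le_right _ _
        linarith

lemma phi_le_self {t : ℝ} (h0 : 0 ≤ t) (h1 : t ≤ 1) : phi t ≤ t := by
  rw [phi_min h0 h1]; exact min_le_left _ _

lemma phi_le_one_sub {t : ℝ} (h0 : 0 ≤ t) (h1 : t ≤ 1) : phi t ≤ 1 - t := by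
  rw [phi_min h0 h1]; exact min_le_right _ _

lemma phi_eq_third {u : ℝ} (h0 : 0 ≤ u) (h1 : u ≤ 1) (h : phi u = 1/3) :
    u = 1/3 ∨ u = 2/3 := by
  rw [phi_min h0 h1] at h
  rcases min_cases u (1-u) with ⟨he, _⟩ | ⟨he, _⟩
  · left; linarith [he.symm.trans h]
  · right; linarith [he.symm.trans h]

lemma phi_zero : phi 0 = 0 := by simp [phi]

lemma phi_third : phi (1/3 : ℝ) = 1/3 := by
  rw [phi_left (by norm_num) (by norm_num)]

noncomputable def KF (b x : ℝ) : ℝ := ∑' j : ℕ, b^j * phi ((2:ℝ)^j * x)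

variable {b : ℝ}

lemma KF_summable (hb0 : 0 < b) (hb1 : b < 1) (x : ℝ) :
    Summable (fun j : ℕ => b^j * phi ((2:ℝ)^j * x)) := by
  apply Summable.of_nonneg_of_le
    (fun j => mul_nonneg (by positivity) (phi_nonneg _))
    (fun j => ?_) ((summable_geometric_of_lt_one hb0.le hb1).mul_right (1/2))
  have := phi_le_half ((2:ℝ)^j * x)
  have hbj : (0:ℝ) ≤ b^j := by positivity
  calc b^j * phi ((2:ℝ)^j * x) ≤ b^j * (1/2) := by nlinarith [phi_nonneg ((2:ℝ)^j*x)]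
  _ = b^j * (1/2) := rfl

lemma KF_nonneg (hb0 : 0 < b) (hb1 : b < 1) (x : ℝ) : 0 ≤ KF b x :=
  tsum_nonneg (fun j => mul_nonneg (by positivity) (phi_nonneg _))

lemma KF_le (hb0 : 0 < b) (hb1 : b < 1) (x : ℝ) : KF b x ≤ 1/(2*(1-b)) := by
  have h := Summable.tsum_le_tsum (f := fun j : ℕ => b^j * phi ((2:ℝ)^j * x))
    (g := fun j : ℕ => b^j * (1/2)) (fun j => ?_) (KF_summable hb0 hb1 x)
    ((summable_geometric_of_lt_one hb0.le hb1).mul_right (1/2))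
  · calc KF b x ≤ ∑' j : ℕ, b^j * (1/2) := h
    _ = (∑' j : ℕ, b^j) * (1/2) := tsum_mul_right
    _ = (1-b)⁻¹ * (1/2) := by rw [tsum_geometric_of_lt_one hb0.le hb1]
    _ = 1/(2*(1-b)) := by rw [inv_eq_one_div]; field_simp
  · have := phi_le_half ((2:ℝ)^j * x)
    have hbj : (0:ℝ) ≤ b^j := by positivity
    nlinarith [phi_nonneg ((2:ℝ)^j*x)]

lemma KF_eq (hb0 : 0 < b) (hb1 : b < 1) (x : ℝ) : KF b x = phi x + b * KF b (2*x) := by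
  rw [KF, Summable.tsum_eq_zero_add (KF_summable hb0 hb1 x)]
  have harg : ∀ j:ℕ, b^(j+1) * phi ((2:ℝ)^(j+1)*x) = b * (b^j * phi ((2:ℝ)^j*(2*x))) := by
    intro j
    rw [show (2:ℝ)^(j+1)*x = (2:ℝ)^j*(2*x) by ring, pow_succ]
    ring
  calc (b^0 * phi ((2:ℝ)^0*x)) + ∑' j:ℕ, b^(j+1)*phi ((2:ℝ)^(j+1)*x)
      = phi x + ∑' j:ℕ, b * (b^j * phi ((2:ℝ)^j*(2*x))) := by
        rw [pow_zero, pow_zero, one_mul, one_mul]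
        congr 1
        exact tsum_congr harg
  _ = phi x + b * KF b (2*x) := by rw [tsum_mul_left, KF]

lemma KF_int_add (z : ℤ) (x : ℝ) : KF b ((z:ℝ) + x) = KF b x := by
  apply tsum_congr
  intro j
  congr 1
  rw [show (2:ℝ)^j * ((z:ℝ) + x) = ((2^j * z : ℤ) : ℝ) + (2:ℝ)^j * x by push_cast; ring,
    phi_int_add]

lemma KF_neg (x : ℝ) : KF b (-x) = KF b x := by
  apply tsum_congr
  intro j
  rw [show (2:ℝ)^j * (-x) = -((2:ℝ)^j * x) by ring, phi_neg]

lemma KF_one_sub (x : ℝ) : KF b (1 - x) = KF b x := by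
  rw [show (1:ℝ) - x = ((1:ℤ):ℝ) + (-x) by push_cast; ring, KF_int_add, KF_neg]

lemma KF_zero : KF b 0 = 0 := by
  have h : ∀ j:ℕ, b^j * phi ((2:ℝ)^j * 0) = 0 := by
    intro j; rw [mul_zero, phi_zero, mul_zero]
  calc KF b 0 = ∑' j:ℕ, (0:ℝ) := tsum_congr h
  _ = 0 := tsum_zero

lemma KF_prefix (hb0 : 0 < b) (hb1 : b < 1) (x : ℝ) (n : ℕ) :
    KF b x = (∑ j ∈ Finset.range n, b^j * phi ((2:ℝ)^j * x)) + b^n * KF b ((2:ℝ)^n * x) := by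
  induction n with
  | zero => simp
  | succ n ih =>
    rw [ih, Finset.sum_range_succ, KF_eq hb0 hb1 ((2:ℝ)^n * x)]
    rw [show (2:ℝ) * ((2:ℝ)^n * x) = (2:ℝ)^(n+1) * x by ring]
    ring

lemma KF_third (hb0 : 0 < b) (hb1 : b < 1) : KF b (1/3) = 1/(3*(1-b)) := by
  have h1 : KF b (1/3) = 1/3 + b * KF b (2/3) := by
    rw [KF_eq hb0 hb1, phi_third]; norm_num
  have h2 : KF b (2/3) = 1/3 + b * KF b (1/3) := by
    rw [KF_eq hb0 hb1, phi_right (by norm_num) (by norm_num)]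
    rw [show (2:ℝ) * (2/3) = ((1:ℤ):ℝ) + 1/3 by push_cast; ring, KF_int_add]
    norm_num
  have hb : (3:ℝ)*(1 - b) ≠ 0 := by intro h; nlinarith
  have h1b : (1:ℝ) + b ≠ 0 := by nlinarith
  have key : KF b (1/3) * ((1-b)*(1+b)) = (1+b)/3 := by linear_combination h1 + b * h2
  rw [eq_div_iff hb]
  apply mul_left_cancel₀ h1b
  linear_combination 3 * key

lemma KF_two_thirds (hb0 : 0 < b) (hb1 : b < 1) : KF b (2/3) = 1/(3*(1-b)) := by
  rw [show (2:ℝ)/3 = 1 - 1/3 by norm_num, KF_one_sub, KF_third hb0 hb1]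

noncomputable def Wf (b t l : ℝ) : ℝ := l * phi t + 1/(3*(1-b)) - l/3 - KF b t

noncomputable def lamseq (b l : ℝ) : ℕ → ℝ
  | 0 => l
  | n+1 => (1 - lamseq b l n)/(2*b)

lemma Mid (hb0 : 0 < b) (hb1 : b < 1) : (1-b) * (1/(3*(1-b))) = 1/3 := by
  have : (1:ℝ) - b ≠ 0 := by linarith
  field_simp

lemma W_step (hb0 : 0 < b) (hb1 : b < 1) (t l : ℝ) :
    Wf b t l = b * Wf b (2*t) ((1-l)/(2*b)) + (1-l)*(1/2 - phi t - phi (2*t)/2) := by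
  have hF := KF_eq hb0 hb1 t
  have hM := Mid hb0 hb1
  have hb : b ≠ 0 := ne_of_gt hb0
  have hl' : b * ((1-l)/(2*b)) = (1-l)/2 := by field_simp
  rw [Wf, Wf]
  linear_combination (-1:ℝ)*hF + hM + (1/3 - phi (2*t)) * hl'

lemma lamseq_mem (hbh : 1/2 < b) {l : ℝ} (hl0 : 0 ≤ l) (hl1 : l ≤ 1) :
    ∀ n, 0 ≤ lamseq b l n ∧ lamseq b l n ≤ 1 := by
  intro n
  induction n with
  | zero => exact ⟨hl0, hl1⟩
  | succ n ih =>
    have hb : (0:ℝ) < 2*b := by linarith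
    constructor
    · apply div_nonneg (by linarith [ih.2]) (by linarith)
    · show (1 - lamseq b l n)/(2*b) ≤ 1
      rw [div_le_one hb]; linarith [ih.1]

lemma lamseq_lt_one (hbh : 1/2 < b) {l : ℝ} (hl0 : 0 ≤ l) (hl1 : l ≤ 1) (n : ℕ) :
    lamseq b l (n+1) < 1 := by
  have hb : (0:ℝ) < 2*b := by linarith
  have := (lamseq_mem hbh hl0 hl1 n).1
  show (1 - lamseq b l n)/(2*b) < 1
  rw [div_lt_one hb]; linarith

lemma W_ge (hbh : 1/2 < b) (hb1 : b < 1) (t : ℝ) {l : ℝ} (hl0 : 0 ≤ l) (hl1 : l ≤ 1) :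
    ∀ n : ℕ, b^n * Wf b ((2:ℝ)^n * t) (lamseq b l n) ≤ Wf b t l := by
  have hb0 : (0:ℝ) < b := by linarith
  intro n
  induction n with
  | zero => simp [lamseq]
  | succ n ih =>
    have hstep := W_step hb0 hb1 ((2:ℝ)^n * t) (lamseq b l n)
    have hmem := lamseq_mem hbh hl0 hl1 n
    have hpos : 0 ≤ (1 - lamseq b l n) * (1/2 - phi ((2:ℝ)^n*t) - phi (2*((2:ℝ)^n*t))/2) := by
      apply mul_nonneg (by linarith [hmem.2])
      linarith [phi_add_phi_two ((2:ℝ)^n*t)]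
    have h2 : b * Wf b (2*((2:ℝ)^n*t)) ((1 - lamseq b l n)/(2*b)) ≤ Wf b ((2:ℝ)^n*t) (lamseq b l n) := by
      rw [hstep]; linarith
    have harg : 2*((2:ℝ)^n*t) = (2:ℝ)^(n+1)*t := by ring
    have hls : (1 - lamseq b l n)/(2*b) = lamseq b l (n+1) := rfl
    rw [harg, hls] at h2
    calc b^(n+1) * Wf b ((2:ℝ)^(n+1)*t) (lamseq b l (n+1))
        = b^n * (b * Wf b ((2:ℝ)^(n+1)*t) (lamseq b l (n+1))) := by ring
    _ ≤ b^n * Wf b ((2:ℝ)^n*t) (lamseq b l n) := by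
        apply mul_le_mul_of_nonneg_left h2 (by positivity)
    _ ≤ Wf b t l := ih

lemma W_nonneg (hbh : 1/2 < b) (hb1 : b < 1) (t : ℝ) {l : ℝ} (hl0 : 0 ≤ l) (hl1 : l ≤ 1) :
    0 ≤ Wf b t l := by
  have hb0 : (0:ℝ) < b := by linarith
  by_contra hneg
  push_neg at hneg
  have h1b : (0:ℝ) < 1 - b := by linarith
  have hK : (0:ℝ) < 1/(2*(1-b)) := by positivity
  obtain ⟨n, hn⟩ := exists_pow_lt_of_lt_one
    (x := -Wf b t l / (1/(2*(1-b)))) (div_pos (by linarith) hK) hb1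
  rw [lt_div_iff₀ hK] at hn
  have hWn : -(1/(2*(1-b))) ≤ Wf b ((2:ℝ)^n * t) (lamseq b l n) := by
    have hmem := lamseq_mem hbh hl0 hl1 n
    have h1 : 1/3 ≤ 1/(3*(1-b)) := by
      rw [div_le_div_iff₀ (by norm_num) (by nlinarith)]; nlinarith
    have h2 := KF_le hb0 hb1 ((2:ℝ)^n * t)
    have h3 : 0 ≤ lamseq b l n * phi ((2:ℝ)^n * t) :=
      mul_nonneg hmem.1 (phi_nonneg _)
    rw [Wf]
    nlinarith [hmem.2]
  have hge := W_ge hbh hb1 t hl0 hl1 n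
  have hmul : b^n * (-(1/(2*(1-b)))) ≤ b^n * Wf b ((2:ℝ)^n*t) (lamseq b l n) :=
    mul_le_mul_of_nonneg_left hWn (le_of_lt (pow_pos hb0 n))
  have hid : b^n * (-(1/(2*(1-b)))) = -(b^n * (1/(2*(1-b)))) := by ring
  rw [hid] at hmul
  linarith

lemma claimE (hbh : 1/2 < b) (hb1 : b < 1) (t : ℝ) {l : ℝ} (hl0 : 0 ≤ l) (hl1 : l ≤ 1) :
    KF b t ≤ l * phi t + 1/(3*(1-b)) - l/3 := by
  have := W_nonneg hbh hb1 t hl0 hl1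
  rw [Wf] at this; linarith

lemma KF_le_M (hbh : 1/2 < b) (hb1 : b < 1) (t : ℝ) : KF b t ≤ 1/(3*(1-b)) := by
  have := claimE hbh hb1 t (l := 0) le_rfl zero_le_one
  simpa using this

lemma W_zero_succ (hbh : 1/2 < b) (hb1 : b < 1) (t : ℝ) {l : ℝ} (hl0 : 0 ≤ l) (hl1 : l ≤ 1)
    (h : Wf b t l = 0) :
    Wf b (2*t) ((1-l)/(2*b)) = 0 ∧ (l = 1 ∨ phi t + phi (2*t)/2 = 1/2) := by
  have hb0 : (0:ℝ) < b := by linarith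
  have hstep := W_step hb0 hb1 t l
  have hl' : 0 ≤ (1-l)/(2*b) ∧ (1-l)/(2*b) ≤ 1 := by
    constructor
    · apply div_nonneg (by linarith) (by linarith)
    · rw [div_le_one (by linarith)]; linarith
  have hW2 := W_nonneg hbh hb1 (2*t) hl'.1 hl'.2
  have hq : 0 ≤ 1/2 - phi t - phi (2*t)/2 := by linarith [phi_add_phi_two t]
  have hprod : 0 ≤ (1-l)*(1/2 - phi t - phi (2*t)/2) := mul_nonneg (by linarith) hq
  have hbW : 0 ≤ b * Wf b (2*t) ((1-l)/(2*b)) := mul_nonneg hb0.le hW2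
  constructor
  · nlinarith [h, hstep]
  · rcases eq_or_lt_of_le hl1 with h1 | h1
    · exact Or.inl h1
    · right
      have hz : (1-l)*(1/2 - phi t - phi (2*t)/2) = 0 := by nlinarith [h, hstep]
      have : 1/2 - phi t - phi (2*t)/2 = 0 := by
        rcases mul_eq_zero.1 hz with h' | h'
        · exfalso; linarith
        · exact h'
      linarith

lemma W_zero_iter (hbh : 1/2 < b) (hb1 : b < 1) (t : ℝ) {l : ℝ} (hl0 : 0 ≤ l) (hl1 : l ≤ 1)
    (h : Wf b t l = 0) :
    ∀ n, Wf b ((2:ℝ)^n * t) (lamseq b l n) = 0 := by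
  intro n
  induction n with
  | zero => simpa [lamseq] using h
  | succ n ih =>
    have hmem := lamseq_mem hbh hl0 hl1 n
    have := (W_zero_succ hbh hb1 ((2:ℝ)^n*t) hmem.1 hmem.2 ih).1
    rw [show 2*((2:ℝ)^n*t) = (2:ℝ)^(n+1)*t by ring] at this
    exact this

lemma W_zero_forces (hbh : 1/2 < b) (hb1 : b < 1) (t : ℝ) {l : ℝ} (hl0 : 0 ≤ l) (hl1 : l ≤ 1)
    (h : Wf b t l = 0) :
    phi (2*t) = 1/3 ∧ (l < 1 → phi t = 1/3) := by
  have hiter := W_zero_iter hbh hb1 t hl0 hl1 h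
  have hcond : ∀ n : ℕ, phi ((2:ℝ)^(n+1)*t) + phi ((2:ℝ)^(n+2)*t)/2 = 1/2 := by
    intro n
    have hmem := lamseq_mem hbh hl0 hl1 (n+1)
    have := (W_zero_succ hbh hb1 ((2:ℝ)^(n+1)*t) hmem.1 hmem.2 (hiter (n+1))).2
    rcases this with h1 | h1
    · exact absurd h1 (ne_of_lt (lamseq_lt_one hbh hl0 hl1 n))
    · rw [show 2*((2:ℝ)^(n+1)*t) = (2:ℝ)^(n+2)*t by ring] at h1
      exact h1
  have key : phi ((2:ℝ)^1*t) = 1/3 := by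
    by_contra hne
    set d := |phi ((2:ℝ)^1*t) - 1/3| with hd
    have hdpos : 0 < d := abs_pos.2 (sub_ne_zero.2 hne)
    have grow : ∀ j : ℕ, |phi ((2:ℝ)^(j+1)*t) - 1/3| = 2^j * d := by
      intro j
      induction j with
      | zero => simp [hd]
      | succ j ihj =>
        have := hcond j
        have heq : phi ((2:ℝ)^(j+2)*t) - 1/3 = -2 * (phi ((2:ℝ)^(j+1)*t) - 1/3) := by linarith
        rw [show j+1+1 = j+2 from rfl, heq, abs_mul, ihj]
        rw [abs_of_nonpos (by norm_num : (-2:ℝ) ≤ 0)]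
        ring
    obtain ⟨j, hj⟩ := pow_unbounded_of_one_lt (x := 1/d) (y := (2:ℝ)) one_lt_two
    have hb1' := grow j
    have : |phi ((2:ℝ)^(j+1)*t) - 1/3| ≤ 1 := by
      have h1 := phi_nonneg ((2:ℝ)^(j+1)*t)
      have h2 := phi_le_half ((2:ℝ)^(j+1)*t)
      rw [abs_le]; constructor <;> linarith
    rw [hb1'] at this
    rw [div_lt_iff₀ hdpos] at hj
    nlinarith
  constructor
  · rw [show (2:ℝ)*t = (2:ℝ)^1*t by ring]; exact key
  · intro hlt
    have hmem := lamseq_mem hbh hl0 hl1 0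
    have := (W_zero_succ hbh hb1 ((2:ℝ)^0*t) hmem.1 hmem.2 (hiter 0)).2
    rcases this with h1 | h1
    · exact absurd h1 (ne_of_lt (by simpa [lamseq] using hlt))
    · rw [show 2*((2:ℝ)^0*t) = (2:ℝ)^1*t by ring] at h1
      rw [key] at h1
      rw [show (2:ℝ)^0*t = t by ring] at h1
      linarith

lemma KF_56 (hbh : 1/2 < b) (hb1 : b < 1) : KF b (5/6) = 1/6 + b * (1/(3*(1-b))) := by
  have hb0 : (0:ℝ) < b := by linarith
  rw [KF_eq hb0 hb1, phi_right (by norm_num) (by norm_num)]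
  rw [show (2:ℝ) * (5/6) = ((1:ℤ):ℝ) + 2/3 by push_cast; ring, KF_int_add,
    KF_two_thirds hb0 hb1]
  norm_num

lemma KF_16 (hbh : 1/2 < b) (hb1 : b < 1) : KF b (1/6) = 1/6 + b * (1/(3*(1-b))) := by
  have hb0 : (0:ℝ) < b := by linarith
  rw [KF_eq hb0 hb1, phi_left (by norm_num) (by norm_num)]
  rw [show (2:ℝ) * (1/6) = (1:ℝ)/3 by ring, KF_third hb0 hb1]

lemma right_forcing (hbh : 1/2 < b) (hb1 : b < 1) {c t : ℝ} (hc : 1 < c)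
    (ht0 : 0 ≤ t) (ht1 : t ≤ 1)
    (hmax : ∀ s, 0 ≤ s → s ≤ 1 → KF b s + c*s ≤ KF b t + c*t) : 1/2 < t := by
  by_contra hcon
  push_neg at hcon
  have hE := claimE hbh hb1 t (l := 1) zero_le_one le_rfl
  rw [phi_left ht0 hcon] at hE
  have h56 := hmax (5/6) (by norm_num) (by norm_num)
  rw [KF_56 hbh hb1] at h56
  have hM := Mid (by linarith) hb1
  have hct : c * t ≤ c * (1/2) := by
    apply mul_le_mul_of_nonneg_left hcon (by linarith)
  nlinarith

lemma left_forcing (hbh : 1/2 < b) (hb1 : b < 1) {c t : ℝ} (hc : c < -1)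
    (ht0 : 0 ≤ t) (ht1 : t ≤ 1)
    (hmax : ∀ s, 0 ≤ s → s ≤ 1 → KF b s + c*s ≤ KF b t + c*t) : t < 1/2 := by
  by_contra hcon
  push_neg at hcon
  have hE := claimE hbh hb1 t (l := 1) zero_le_one le_rfl
  rw [phi_right hcon ht1] at hE
  have h16 := hmax (1/6) (by norm_num) (by norm_num)
  rw [KF_16 hbh hb1] at h16
  have hM := Mid (by linarith) hb1
  have hct : (c - 1) * t ≤ (c - 1) * (1/2) := by
    apply mul_le_mul_of_nonpos_left hcon (by linarith)
  nlinarith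

lemma classify_nonneg (hbh : 1/2 < b) (hb1 : b < 1) {c t : ℝ} (hc0 : 0 ≤ c) (hc1 : c ≤ 1)
    (ht0 : 0 ≤ t) (ht1 : t ≤ 1)
    (hmax : ∀ s, 0 ≤ s → s ≤ 1 → KF b s + c*s ≤ KF b t + c*t) :
    t = 1/3 ∨ t = 2/3 ∨ t = 5/6 := by
  have hb0 : (0:ℝ) < b := by linarith
  have h23 := hmax (2/3) (by norm_num) (by norm_num)
  rw [KF_two_thirds hb0 hb1] at h23
  have hE := claimE hbh hb1 t (l := c) hc0 hc1
  -- Wf b t c ≤ c*(phi t + t - 1)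
  have hphile : phi t ≤ 1 - t := phi_le_one_sub ht0 ht1
  have hWle : Wf b t c ≤ c * (phi t + t - 1) := by
    rw [Wf]; nlinarith
  have hWge := W_nonneg hbh hb1 t hc0 hc1
  have hcnn : c * (phi t + t - 1) ≤ 0 := by nlinarith
  have hW0 : Wf b t c = 0 := le_antisymm (by linarith) hWge
  have hforce := W_zero_forces hbh hb1 t hc0 hc1 hW0
  rcases eq_or_lt_of_le hc0 with hc0' | hc0'
  · -- c = 0
    have := hforce.2 (by linarith)
    rcases phi_eq_third ht0 ht1 this with h | h
    · exact Or.inl h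
    · exact Or.inr (Or.inl h)
  · -- c > 0 : phi t + t = 1
    have hsum : phi t + t = 1 := by
      by_contra hne
      have : phi t + t < 1 := lt_of_le_of_ne (by linarith) hne
      nlinarith
    rcases lt_or_eq_of_le hc1 with hlt | heq
    · -- c < 1: phi t = 1/3
      have h3 := hforce.2 hlt
      right; left; linarith
    · -- c = 1: phi (2t) = 1/3
      have h3 := hforce.1
      have ht2 : 1/2 ≤ t := by
        have := phi_le_self ht0 ht1
        linarith
      have h2t : phi (2*t - 1) = 1/3 := by
        rw [show 2*t - 1 = -((1:ℤ):ℝ) + 2*t by push_cast; ring]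
        rw [show -(((1:ℤ):ℝ)) = (((-1:ℤ)):ℝ) by push_cast; ring, phi_int_add]
        exact h3
      rcases phi_eq_third (by linarith) (by linarith) h2t with h | h
      · right; left; linarith
      · right; right; linarith

lemma classify (hbh : 1/2 < b) (hb1 : b < 1) {c t : ℝ} (hc0 : -1 ≤ c) (hc1 : c ≤ 1)
    (ht0 : 0 ≤ t) (ht1 : t ≤ 1)
    (hmax : ∀ s, 0 ≤ s → s ≤ 1 → KF b s + c*s ≤ KF b t + c*t) :
    t = 1/3 ∨ t = 2/3 ∨ t = 5/6 ∨ t = 1/6 := by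
  rcases le_or_gt 0 c with hc | hc
  · rcases classify_nonneg hbh hb1 hc hc1 ht0 ht1 hmax with h | h | h
    · exact Or.inl h
    · exact Or.inr (Or.inl h)
    · exact Or.inr (Or.inr (Or.inl h))
  · -- reflect
    have hmax' : ∀ s, 0 ≤ s → s ≤ 1 → KF b s + (-c)*s ≤ KF b (1-t) + (-c)*(1-t) := by
      intro s hs0 hs1
      have := hmax (1-s) (by linarith) (by linarith)
      rw [KF_one_sub] at this
      have h2 : KF b (1-t) = KF b t := KF_one_sub t
      linarith
    rcases classify_nonneg hbh hb1 (by linarith) (by linarith) (by linarith) (by linarith)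
      hmax' with h | h | h
    · right; left; linarith
    · left; linarith
    · right; right; right; linarith

lemma G_rec (hbh : 1/2 < b) (hb1 : b < 1) {h : ℝ} (h1 : -(1/12) ≤ h) (h2 : h ≤ 1/6) :
    KF b (1/3 + h) = (1/3 + h) + b*(1/3 - 2*h) + b^2 * KF b (1/3 + 4*h) := by
  have hb0 : (0:ℝ) < b := by linarith
  rw [KF_eq hb0 hb1, KF_eq hb0 hb1 (2*(1/3+h))]
  rw [phi_left (by linarith) (by linarith)]
  rw [show (2:ℝ)*(1/3+h) = 2/3 + 2*h by ring]
  rw [phi_right (by linarith) (by linarith)]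
  rw [show (2:ℝ)*(2/3+2*h) = ((1:ℤ):ℝ) + (1/3 + 4*h) by push_cast; ring, KF_int_add]
  ring

lemma G_iter (hbh : 1/2 < b) (hb1 : b < 1) (K : ℕ) :
    ∀ h : ℝ, (4:ℝ)^K * |h| ≤ 1/3 →
    KF b (1/3 + h) - 1/(3*(1-b)) =
      -((1/(2*b+1))*((4*b^2)^K - 1))*h + b^(2*K) * (KF b (1/3 + 4^K*h) - 1/(3*(1-b))) := by
  have hb0 : (0:ℝ) < b := by linarith
  induction K with
  | zero => intro h hh; simp
  | succ K ih =>
    intro h hh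
    have habs : (4:ℝ)^K * |h| ≤ 1/12 := by
      have heq : (4:ℝ)^(K+1) * |h| = 4 * ((4:ℝ)^K * |h|) := by ring
      rw [heq] at hh
      linarith
    have habs2 : |(4:ℝ)^K * h| ≤ 1/12 := by
      rw [abs_mul, abs_of_nonneg (by positivity : (0:ℝ) ≤ (4:ℝ)^K)]
      exact habs
    have hb2 := abs_le.1 habs2
    have hrec := G_rec hbh hb1 (h := (4:ℝ)^K * h) (by linarith [hb2.1]) (by linarith [hb2.2])
    have hih := ih h (by linarith)
    have harg : (1:ℝ)/3 + 4*((4:ℝ)^K*h) = 1/3 + 4^(K+1)*h := by ring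
    rw [harg] at hrec
    have hg : (2*b+1) * (1/(2*b+1)) = 1 := by
      have : (2*b+1) ≠ 0 := by linarith
      field_simp
    have hM := Mid hb0 hb1
    rw [hih, hrec]
    ring_nf
    linear_combination (((4:ℝ)*b^2)^K * h * (2*b-1)) * hg - (b^(2*K)*(1+b)) * hM

lemma G_le_zero (hbh : 1/2 < b) (hb1 : b < 1) (h : ℝ) :
    KF b (1/3 + h) - 1/(3*(1-b)) ≤ 0 := by
  linarith [KF_le_M hbh hb1 (1/3 + h)]

lemma G_le_lin (hbh : 1/2 < b) (hb1 : b < 1) {h : ℝ} (h1 : -(1/3) ≤ h) (h2 : h ≤ 1/6) :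
    KF b (1/3 + h) - 1/(3*(1-b)) ≤ h := by
  have hb0 : (0:ℝ) < b := by linarith
  have hM := Mid hb0 hb1
  rw [KF_eq hb0 hb1, phi_left (by linarith) (by linarith)]
  have := KF_le_M hbh hb1 (2*(1/3+h))
  nlinarith

lemma G_superlinear (hbh : 1/2 < b) (hb1 : b < 1) (C : ℝ) (hC : 0 < C) :
    ∃ δ : ℝ, 0 < δ ∧ ∀ h : ℝ, |h| ≤ δ →
      KF b (1/3 + h) - 1/(3*(1-b)) ≤ -(C * |h|) := by
  have hb0 : (0:ℝ) < b := by linarith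
  have h4b : (1:ℝ) < 4*b^2 := by nlinarith
  obtain ⟨K, hK⟩ := pow_unbounded_of_one_lt (max (C*(2*b+1) + 1) (2*C)) h4b
  refine ⟨1/(3*4^K), by positivity, ?_⟩
  intro h hh
  have h4K : (0:ℝ) < 4^K := by positivity
  have hbound : (4:ℝ)^K * |h| ≤ 1/3 := by
    rw [show (1:ℝ)/3 = 4^K * (1/(3*4^K)) by field_simp]
    exact mul_le_mul_of_nonneg_left hh h4K.le
  have hiter := G_iter hbh hb1 K h hbound
  set Y := (4*b^2)^K with hYdef
  set γ := 1/(2*b+1) with hγdef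
  have hγ : γ * (2*b+1) = 1 := by rw [hγdef]; field_simp
  have hγpos : 0 < γ := by rw [hγdef]; positivity
  have hγhalf : γ ≤ 1/2 := by
    rw [hγdef, div_le_div_iff₀ (by linarith) (by norm_num)]; linarith
  have hYpos : (0:ℝ) < Y := by rw [hYdef]; positivity
  have hK1 : C ≤ γ * (Y - 1) := by
    have h1 : C*(2*b+1) + 1 ≤ Y := le_of_lt (lt_of_le_of_lt (le_max_left _ _) hK)
    nlinarith
  have hK2 : C ≤ Y - γ * (Y - 1) := by
    have h1 : 2*C ≤ Y := le_of_lt (lt_of_le_of_lt (le_max_right _ _) hK)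
    nlinarith
  have hb2K : (0:ℝ) < b^(2*K) := by positivity
  have hpowid : b^(2*K)*((4:ℝ)^K*h) = Y * h := by
    rw [hYdef, mul_pow, pow_mul]; ring
  rcases le_or_gt 0 h with hpos | hneg
  · rw [abs_of_nonneg hpos]
    have hG := G_le_zero hbh hb1 ((4:ℝ)^K * h)
    nlinarith [hiter, mul_le_mul_of_nonneg_left hG hb2K.le]
  · rw [abs_of_neg hneg]
    have habs : |(4:ℝ)^K * h| ≤ 1/3 := by
      rw [abs_mul, abs_of_nonneg h4K.le]; exact hbound
    have hint := abs_le.1 habs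
    have hlt : (4:ℝ)^K * h < 0 := mul_neg_of_pos_of_neg h4K hneg
    have hlin := G_le_lin hbh hb1 (h := (4:ℝ)^K*h) (by linarith [hint.1]) (by linarith)
    have s1 : b^(2*K)*(KF b (1/3 + 4^K*h) - 1/(3*(1-b))) ≤ b^(2*K)*((4:ℝ)^K*h) :=
      mul_le_mul_of_nonneg_left hlin hb2K.le
    rw [hpowid] at s1
    have s4 : (Y - γ*(Y - 1) - C) * h ≤ 0 :=
      mul_nonpos_of_nonneg_of_nonpos (by linarith) hneg.le
    nlinarith [hiter, s1]

lemma backward (hbh : 1/2 < b) (hb1 : b < 1) (x : ℝ) (k N : ℕ)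
    (hx : x = (k:ℝ)/2^N + 1/(3*2^N) ∨ x = (k:ℝ)/2^N + 2/(3*2^N)) :
    ∃ ε > 0, ∀ y ∈ Set.Icc (0:ℝ) 1, |y - x| < ε → KF b y ≤ KF b x := by
  have hb0 : (0:ℝ) < b := by linarith
  set CN : ℝ := ∑ j ∈ Finset.range N, b^j * 2^j with hCN
  have hCpos : (0:ℝ) ≤ CN := Finset.sum_nonneg (fun j _ => by positivity)
  have h2N : (0:ℝ) < 2^N := by positivity
  have hbN : (0:ℝ) < b^N := by positivity
  set C : ℝ := (CN + 1)/(b^N * 2^N) with hC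
  have hCpos' : 0 < C := by apply div_pos (by linarith) (by positivity)
  obtain ⟨δ, hδ, hG⟩ := G_superlinear hbh hb1 C hCpos'
  refine ⟨δ/2^N, by positivity, ?_⟩
  intro y _ hy
  set u : ℝ := 2^N*(y - x) with hu
  have huabs : |u| ≤ δ := by
    rw [hu, abs_mul, abs_of_nonneg h2N.le]
    calc (2:ℝ)^N * |y-x| ≤ 2^N * (δ/2^N) :=
          mul_le_mul_of_nonneg_left (le_of_lt hy) h2N.le
    _ = δ := by field_simp
  have hyx : KF b ((2:ℝ)^N*y) - 1/(3*(1-b)) ≤ -(C * |u|) ∧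
      KF b ((2:ℝ)^N*x) = 1/(3*(1-b)) := by
    rcases hx with hx | hx
    · have h1 : (2:ℝ)^N*y = ((k:ℤ):ℝ) + (1/3 + u) := by
        rw [hu, hx]; push_cast; field_simp; ring
      have h2 : (2:ℝ)^N*x = ((k:ℤ):ℝ) + (1/3) := by
        rw [hx]; push_cast; field_simp
      rw [h1, h2, KF_int_add, KF_int_add, KF_third hb0 hb1]
      exact ⟨hG u huabs, rfl⟩
    · have h1 : (2:ℝ)^N*y = ((k:ℤ):ℝ) + (2/3 + u) := by
        rw [hu, hx]; push_cast; field_simp; ring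
      have h2 : (2:ℝ)^N*x = ((k:ℤ):ℝ) + (2/3) := by
        rw [hx]; push_cast; field_simp
      have h3 : KF b (2/3 + u) = KF b (1/3 + (-u)) := by
        rw [show (2:ℝ)/3+u = 1 - (1/3 + (-u)) by ring, KF_one_sub]
      rw [h1, h2, KF_int_add, KF_int_add, h3, KF_two_thirds hb0 hb1]
      have := hG (-u) (by rw [abs_neg]; exact huabs)
      rw [abs_neg] at this
      exact ⟨this, rfl⟩
  have hpre_y := KF_prefix hb0 hb1 y N
  have hpre_x := KF_prefix hb0 hb1 x N
  have hsum : (∑ j ∈ Finset.range N, b^j*phi ((2:ℝ)^j*y))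
      - (∑ j ∈ Finset.range N, b^j*phi ((2:ℝ)^j*x)) ≤ CN * |y - x| := by
    rw [← Finset.sum_sub_distrib]
    calc ∑ j ∈ Finset.range N, (b^j*phi ((2:ℝ)^j*y) - b^j*phi ((2:ℝ)^j*x))
        ≤ ∑ j ∈ Finset.range N, b^j*2^j*|y-x| := by
          apply Finset.sum_le_sum
          intro j _
          have hl := phi_lipschitz ((2:ℝ)^j*y) ((2:ℝ)^j*x)
          have h2j : (0:ℝ) < 2^j := by positivity
          have hbj : (0:ℝ) ≤ b^j := by positivity
          have habs : |(2:ℝ)^j*y - (2:ℝ)^j*x| = 2^j*|y-x| := by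
            rw [show (2:ℝ)^j*y - 2^j*x = 2^j*(y-x) by ring, abs_mul, abs_of_nonneg h2j.le]
          rw [habs] at hl
          have hl2 := (abs_le.1 hl).2
          calc b^j*phi ((2:ℝ)^j*y) - b^j*phi ((2:ℝ)^j*x)
              = b^j*(phi ((2:ℝ)^j*y) - phi ((2:ℝ)^j*x)) := by ring
          _ ≤ b^j*(2^j*|y-x|) := mul_le_mul_of_nonneg_left hl2 hbj
          _ = b^j*2^j*|y-x| := by ring
    _ = CN * |y-x| := by rw [hCN, Finset.sum_mul]
  have hb2 : b^N * (KF b ((2:ℝ)^N*y) - KF b ((2:ℝ)^N*x)) ≤ -((CN+1) * |y - x|) := by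
    rw [hyx.2]
    have hmul := mul_le_mul_of_nonneg_left hyx.1 hbN.le
    have hCeq : b^N * (C*|u|) = (CN+1)*|y-x| := by
      rw [hC, hu, abs_mul, abs_of_nonneg h2N.le]
      field_simp
    nlinarith [hmul]
  have habs0 : 0 ≤ |y - x| := abs_nonneg _
  nlinarith [hpre_y, hpre_x, hsum, hb2]

lemma KF_lower (hbh : 1/2 < b) (hb1 : b < 1) (l : ℕ) {s : ℝ} (hs0 : 0 ≤ s)
    (hs1 : s ≤ 1/2^l) :
    (∑ j ∈ Finset.range l, b^j*2^j) * s ≤ KF b s := by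
  have hb0 : (0:ℝ) < b := by linarith
  rw [KF_prefix hb0 hb1 s l, Finset.sum_mul]
  have hterm : ∀ j ∈ Finset.range l, b^j*2^j*s ≤ b^j * phi ((2:ℝ)^j * s) := by
    intro j hj
    rw [Finset.mem_range] at hj
    have h2j : (0:ℝ) < 2^j := by positivity
    have hphi : phi ((2:ℝ)^j * s) = (2:ℝ)^j * s := by
      apply phi_left (by positivity)
      calc (2:ℝ)^j * s ≤ (2:ℝ)^j * (1/2^l) := mul_le_mul_of_nonneg_left hs1 h2j.le
      _ ≤ 1/2 := by
        rw [mul_one_div, div_le_div_iff₀ (by positivity : (0:ℝ) < 2^l) (by norm_num : (0:ℝ) < 2)]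
        calc (2:ℝ)^j * 2 = 2^(j+1) := by ring
        _ ≤ 2^l := by
            apply pow_le_pow_right₀ (by norm_num)
            omega
        _ = 1 * 2^l := by ring
    rw [hphi]
    have : b^j*2^j*s = b^j * ((2:ℝ)^j * s) := by ring
    rw [this]
  calc ∑ j ∈ Finset.range l, b^j*2^j*s ≤ ∑ j ∈ Finset.range l, b^j * phi ((2:ℝ)^j*s) :=
        Finset.sum_le_sum hterm
  _ ≤ _ := by
    have := KF_nonneg hb0 hb1 ((2:ℝ)^l * s)
    nlinarith [pow_pos hb0 l]

noncomputable def cseq (b x : ℝ) : ℕ → ℝ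
  | 0 => 0
  | n+1 => if Int.fract ((2:ℝ)^n * x) < 1/2
      then (cseq b x n + 1)/(2*b) else (cseq b x n - 1)/(2*b)

noncomputable def Aseq (b x : ℝ) : ℕ → ℝ
  | 0 => 0
  | n+1 => if Int.fract ((2:ℝ)^n * x) < 1/2
      then Aseq b x n else Aseq b x n + b^n * (cseq b x n + 1)/2

lemma floor_succ (x : ℝ) (n : ℕ) :
    ⌊(2:ℝ)^(n+1) * x⌋ = 2*⌊(2:ℝ)^n*x⌋ + (if Int.fract ((2:ℝ)^n*x) < 1/2 then 0 else 1) := by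
  have hsplit : (2:ℝ)^(n+1)*x = ((2*⌊(2:ℝ)^n*x⌋ : ℤ) : ℝ) + 2*Int.fract ((2:ℝ)^n*x) := by
    rw [Int.fract]
    push_cast
    ring
  rw [hsplit, Int.floor_intCast_add]
  congr 1
  have hf0 := Int.fract_nonneg ((2:ℝ)^n*x)
  have hf1 := Int.fract_lt_one ((2:ℝ)^n*x)
  by_cases hc : Int.fract ((2:ℝ)^n*x) < 1/2
  · rw [if_pos hc, Int.floor_eq_zero_iff.2 ⟨by linarith, by linarith⟩]
  · push_neg at hc
    rw [if_neg (not_lt.2 hc)]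
    have : ⌊2*Int.fract ((2:ℝ)^n*x)⌋ = 1 := by
      apply Int.floor_eq_iff.2
      constructor
      · push_cast; linarith
      · push_cast; linarith
    rw [this]

lemma decomp (hbh : 1/2 < b) (hb1 : b < 1) (x : ℝ) :
    ∀ n : ℕ, ∀ s : ℝ, 0 ≤ s → s ≤ 1 →
      KF b (((⌊(2:ℝ)^n*x⌋ : ℝ) + s)/2^n) = Aseq b x n + b^n * (cseq b x n * s + KF b s) := by
  have hb0 : (0:ℝ) < b := by linarith
  intro n
  induction n with
  | zero =>
    intro s hs0 hs1
    simp only [pow_zero, one_mul, cseq, Aseq]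
    rw [div_one, show ((⌊x⌋:ℝ) + s) = ((⌊x⌋ : ℤ):ℝ) + s by push_cast; ring, KF_int_add]
    ring
  | succ n ih =>
    intro s hs0 hs1
    have hfl := floor_succ x n
    by_cases hc : Int.fract ((2:ℝ)^n*x) < 1/2
    · rw [if_pos hc] at hfl
      have harg : ((⌊(2:ℝ)^(n+1)*x⌋ : ℝ) + s)/2^(n+1) = ((⌊(2:ℝ)^n*x⌋ : ℝ) + s/2)/2^n := by
        rw [hfl]
        push_cast
        field_simp
        ring
      rw [harg, ih (s/2) (by linarith) (by linarith)]
      have hKF : KF b (s/2) = s/2 + b * KF b s := by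
        rw [KF_eq hb0 hb1, phi_left (by linarith) (by linarith)]
        rw [show (2:ℝ)*(s/2) = s by ring]
      rw [hKF]
      show _ = Aseq b x (n+1) + _
      rw [show Aseq b x (n+1) = Aseq b x n from by rw [Aseq, if_pos hc]]
      rw [show cseq b x (n+1) = (cseq b x n + 1)/(2*b) from by rw [cseq, if_pos hc]]
      have hbne : b ≠ 0 := ne_of_gt hb0
      field_simp
      ring
    · rw [if_neg hc] at hfl
      have harg : ((⌊(2:ℝ)^(n+1)*x⌋ : ℝ) + s)/2^(n+1) = ((⌊(2:ℝ)^n*x⌋ : ℝ) + (1+s)/2)/2^n := by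
        rw [hfl]
        push_cast
        field_simp
        ring
      rw [harg, ih ((1+s)/2) (by linarith) (by linarith)]
      have hKF : KF b ((1+s)/2) = (1-s)/2 + b * KF b s := by
        rw [KF_eq hb0 hb1, phi_right (by linarith) (by linarith)]
        rw [show (2:ℝ)*((1+s)/2) = ((1:ℤ):ℝ) + s by push_cast; ring, KF_int_add]
        ring
      rw [hKF]
      show _ = Aseq b x (n+1) + _
      rw [show Aseq b x (n+1) = Aseq b x n + b^n * (cseq b x n + 1)/2 from by
        rw [Aseq, if_neg hc]]
      rw [show cseq b x (n+1) = (cseq b x n - 1)/(2*b) from by rw [cseq, if_neg hc]]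
      have hbne : b ≠ 0 := ne_of_gt hb0
      field_simp
      ring

set_option maxHeartbeats 2000000 in
lemma forward (hbh : 1/2 < b) (hb1 : b < 1) (x : ℝ) (hx0 : 0 < x) (hx1 : x < 1)
    (ε : ℝ) (hε : 0 < ε)
    (hmax : ∀ y ∈ Set.Icc (0:ℝ) 1, |y - x| < ε → KF b y ≤ KF b x) :
    ∃ k N : ℕ, x = (k:ℝ)/2^N + 1/(3*2^N) ∨ x = (k:ℝ)/2^N + 2/(3*2^N) := by
  have hb0 : (0:ℝ) < b := by linarith
  by_cases hdy : ∃ (z : ℤ) (m : ℕ), x = (z:ℝ)/2^m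
  · exfalso
    obtain ⟨z, m, hz⟩ := hdy
    set CM : ℝ := ∑ j ∈ Finset.range m, b^j*2^j with hCM
    have hCM0 : (0:ℝ) ≤ CM := Finset.sum_nonneg fun j _ => by positivity
    have hbm : (0:ℝ) < b^m := by positivity
    have h2m : (0:ℝ) < 2^m := by positivity
    obtain ⟨l0, hl0⟩ := exists_nat_gt (CM / (b^m * 2^m))
    obtain ⟨l1, hl1⟩ := exists_pow_lt_of_lt_one (x := min ε (1-x))
      (lt_min hε (by linarith)) (by norm_num : (1:ℝ)/2 < 1)
    set l : ℕ := max (max l0 1) l1 with hldef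
    have hll0 : l0 ≤ l := le_trans (le_max_left _ _) (le_max_left _ _)
    have hll1 : l1 ≤ l := le_max_right _ _
    have hl1' : (1:ℕ) ≤ l := le_trans (le_max_right _ _) (le_max_left _ _)
    have h2l : (0:ℝ) < 2^l := by positivity
    set h : ℝ := 1/(2^m*2^l) with hh
    have hhpos : 0 < h := by rw [hh]; positivity
    have hhsmall : h ≤ (1/2:ℝ)^l1 := by
      rw [hh]
      calc (1:ℝ)/(2^m*2^l) ≤ 1/2^l := by
            rw [div_le_div_iff₀ (by positivity) h2l]
            nlinarith [one_le_pow₀ (by norm_num : (1:ℝ) ≤ 2) (n := m)]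
      _ = (1/2:ℝ)^l := by rw [div_pow, one_pow]
      _ ≤ (1/2:ℝ)^l1 := pow_le_pow_of_le_one (by norm_num) (by norm_num) hll1
    have hyIcc : x + h ∈ Set.Icc (0:ℝ) 1 := by
      constructor
      · linarith
      · have := lt_of_le_of_lt hhsmall hl1
        have := min_le_right ε (1-x)
        linarith
    have hyclose : |(x + h) - x| < ε := by
      rw [show x + h - x = h by ring, abs_of_pos hhpos]
      have := lt_of_le_of_lt hhsmall hl1
      have := min_le_left ε (1-x)
      linarith
    have hKle := hmax (x+h) hyIcc hyclose
    -- lower bound for KF (x+h) - KF x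
    have hzx : (2:ℝ)^m * x = (z:ℝ) := by
      rw [hz]; field_simp
    have hKx2 : KF b ((2:ℝ)^m * x) = 0 := by
      rw [hzx, show (z:ℝ) = (z:ℝ) + 0 by ring, KF_int_add, KF_zero]
    have hKy2 : KF b ((2:ℝ)^m * (x+h)) = KF b (1/2^l) := by
      rw [show (2:ℝ)^m * (x+h) = (z:ℝ) + 1/2^l by rw [mul_add, hzx, hh]; field_simp, KF_int_add]
    have hKlow : (l:ℝ)*(1/2^l) ≤ KF b (1/2^l) := by
      have := KF_lower hbh hb1 l (s := 1/2^l) (by positivity) le_rfl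
      have hsum : (l:ℝ) ≤ ∑ j ∈ Finset.range l, b^j*2^j := by
        calc (l:ℝ) = ∑ j ∈ Finset.range l, (1:ℝ) := by simp
        _ ≤ _ := by
          apply Finset.sum_le_sum
          intro j _
          have : (1:ℝ) ≤ (2*b)^j := one_le_pow₀ (by linarith)
          calc (1:ℝ) ≤ (2*b)^j := this
          _ = b^j*2^j := by rw [mul_pow]; ring
      have h2 := mul_le_mul_of_nonneg_right hsum (by positivity : (0:ℝ) ≤ 1/2^l)
      linarith
    have hpre_y := KF_prefix hb0 hb1 (x+h) m
    have hpre_x := KF_prefix hb0 hb1 x m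
    have hsum : (∑ j ∈ Finset.range m, b^j*phi ((2:ℝ)^j*(x+h)))
        - (∑ j ∈ Finset.range m, b^j*phi ((2:ℝ)^j*x)) ≥ -(CM * h) := by
      rw [← Finset.sum_sub_distrib]
      have : ∀ j ∈ Finset.range m, -(b^j*2^j*h) ≤ b^j*phi ((2:ℝ)^j*(x+h)) - b^j*phi ((2:ℝ)^j*x) := by
        intro j _
        have hl := phi_lipschitz ((2:ℝ)^j*(x+h)) ((2:ℝ)^j*x)
        have h2j : (0:ℝ) < 2^j := by positivity
        have hbj : (0:ℝ) ≤ b^j := by positivity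
        have habs : |(2:ℝ)^j*(x+h) - (2:ℝ)^j*x| = 2^j*h := by
          rw [show (2:ℝ)^j*(x+h) - 2^j*x = 2^j*h by ring, abs_of_pos (by positivity)]
        rw [habs] at hl
        have hl1 := (abs_le.1 hl).1
        have := mul_le_mul_of_nonneg_left hl1 hbj
        calc -(b^j*2^j*h) = b^j*(-(2^j*h)) := by ring
        _ ≤ b^j*(phi ((2:ℝ)^j*(x+h)) - phi ((2:ℝ)^j*x)) := by
            apply mul_le_mul_of_nonneg_left _ hbj
            linarith
        _ = b^j*phi ((2:ℝ)^j*(x+h)) - b^j*phi ((2:ℝ)^j*x) := by ring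
      have hS := Finset.sum_le_sum this
      have hsum2 : ∑ j ∈ Finset.range m, -(b^j*2^j*h) = -(CM * h) := by
        rw [hCM, Finset.sum_mul]
        exact Finset.sum_neg_distrib _
      linarith [hS, hsum2.le, hsum2.ge]
    -- combine
    have hgain : (l:ℝ) * (b^m * 2^m) * h ≤ b^m * KF b ((2:ℝ)^m*(x+h)) := by
      rw [hKy2]
      have h1 : (l:ℝ)*(1/2^l) ≤ KF b (1/2^l) := hKlow
      have hid : (l:ℝ) * (b^m * 2^m) * h = b^m * ((l:ℝ)*(1/2^l)) := by
        rw [hh]; field_simp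
      rw [hid]
      exact mul_le_mul_of_nonneg_left h1 hbm.le
    have hlgt : CM < (l:ℝ) * (b^m * 2^m) := by
      have h1 : CM/(b^m*2^m) < (l0:ℝ) := hl0
      have h2 : (l0:ℝ) ≤ (l:ℝ) := by exact_mod_cast hll0
      rw [div_lt_iff₀ (by positivity)] at h1
      have h3 := mul_le_mul_of_nonneg_right h2 (le_of_lt (by positivity : (0:ℝ) < b^m*2^m))
      nlinarith
    have hKx2' : b^m * KF b ((2:ℝ)^m * x) = 0 := by rw [hKx2, mul_zero]
    have hfin := mul_lt_mul_of_pos_right hlgt hhpos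
    linarith [hKle, hpre_y, hpre_x, hsum, hgain, hKx2', hfin]
  · push_neg at hdy
    have htn' : ∀ n : ℕ, Int.fract ((2:ℝ)^n*x) = 2^n*x - (⌊(2:ℝ)^n*x⌋:ℝ) := by
      intro n; rw [Int.fract]
    have ht0 : ∀ n : ℕ, 0 < Int.fract ((2:ℝ)^n*x) := by
      intro n
      rcases (Int.fract_nonneg ((2:ℝ)^n*x)).lt_or_eq with hgt | heq
      · exact hgt
      · exfalso
        apply hdy ⌊(2:ℝ)^n*x⌋ n
        have h1 : (2:ℝ)^n*x = (⌊(2:ℝ)^n*x⌋:ℝ) := by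
          have := htn' n; rw [← heq] at this; linarith
        rw [eq_div_iff (by positivity : (2:ℝ)^n ≠ 0)]
        linarith [h1]
    have ht1 : ∀ n : ℕ, Int.fract ((2:ℝ)^n*x) < 1 := fun n => Int.fract_lt_one _
    have htne : ∀ n : ℕ, Int.fract ((2:ℝ)^n*x) ≠ 1/2 := by
      intro n hc
      apply hdy (2*⌊(2:ℝ)^n*x⌋+1) (n+1)
      have h1 : (2:ℝ)^n * x = (⌊(2:ℝ)^n*x⌋:ℝ) + 1/2 := by
        have := htn' n; rw [hc] at this; linarith
      rw [eq_div_iff (by positivity : (2:ℝ)^(n+1) ≠ 0)]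
      push_cast
      linear_combination (2:ℝ) * h1
    have hfl0 : ∀ n : ℕ, (0:ℤ) ≤ ⌊(2:ℝ)^n*x⌋ := by
      intro n
      apply Int.floor_nonneg.2
      positivity
    have hfllt : ∀ n : ℕ, ((⌊(2:ℝ)^n*x⌋:ℝ) + 1) ≤ 2^n := by
      intro n
      have h1 : (2:ℝ)^n * x < 2^n := by nlinarith [pow_pos (by norm_num : (0:ℝ) < 2) n]
      have h2 : ⌊(2:ℝ)^n*x⌋ < (2^n : ℤ) := by
        apply Int.floor_lt.2
        push_cast
        linarith
      have h3 : ⌊(2:ℝ)^n*x⌋ + 1 ≤ (2^n : ℤ) := h2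
      calc ((⌊(2:ℝ)^n*x⌋:ℝ) + 1) = ((⌊(2:ℝ)^n*x⌋ + 1 : ℤ) : ℝ) := by push_cast; ring
      _ ≤ ((2^n : ℤ) : ℝ) := by exact_mod_cast h3
      _ = 2^n := by push_cast; ring
    obtain ⟨n0, hn0⟩ := exists_pow_lt_of_lt_one hε (by norm_num : (1:ℝ)/2 < 1)
    have hsmall : ∀ n : ℕ, n0 ≤ n → (1:ℝ)/2^n < ε := by
      intro n hn
      calc (1:ℝ)/2^n ≤ 1/2^n0 := by
            apply one_div_le_one_div_of_le (by positivity)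
            exact pow_le_pow_right₀ (by norm_num) hn
      _ = (1/2:ℝ)^n0 := by rw [div_pow, one_pow]
      _ < ε := hn0
    have hX : ∀ n, n0 ≤ n → ∀ s, 0 ≤ s → s ≤ 1 →
        KF b s + cseq b x n * s ≤
          KF b (Int.fract ((2:ℝ)^n*x)) + cseq b x n * Int.fract ((2:ℝ)^n*x) := by
      intro n hn s hs0 hs1
      have hdec_s := decomp hbh hb1 x n s hs0 hs1
      have hdec_t := decomp hbh hb1 x n (Int.fract ((2:ℝ)^n*x))
        (le_of_lt (ht0 n)) (le_of_lt (ht1 n))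
      have hxeq : x = ((⌊(2:ℝ)^n*x⌋:ℝ) + Int.fract ((2:ℝ)^n*x))/2^n := by
        rw [htn' n]
        field_simp; ring
      have hyIcc : ((⌊(2:ℝ)^n*x⌋:ℝ) + s)/2^n ∈ Set.Icc (0:ℝ) 1 := by
        constructor
        · apply div_nonneg _ (by positivity)
          have := hfl0 n
          have : (0:ℝ) ≤ (⌊(2:ℝ)^n*x⌋:ℝ) := by exact_mod_cast this
          linarith
        · rw [div_le_one (by positivity)]
          linarith [hfllt n]
      have hclose : |((⌊(2:ℝ)^n*x⌋:ℝ) + s)/2^n - x| < ε := by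
        have hdiff : ((⌊(2:ℝ)^n*x⌋:ℝ) + s)/2^n - x = (s - Int.fract ((2:ℝ)^n*x))/2^n := by
          rw [htn' n]
          field_simp
          linarith [htn' n]
        rw [hdiff, abs_div, abs_of_pos (by positivity : (0:ℝ) < (2:ℝ)^n)]
        have h1 : |s - Int.fract ((2:ℝ)^n*x)| ≤ 1 := by
          rw [abs_le]
          constructor
          · linarith [ht1 n]
          · linarith [ht0 n]
        calc |s - Int.fract ((2:ℝ)^n*x)|/2^n ≤ 1/2^n := by gcongr
        _ < ε := hsmall n hn
      have hKy := hmax _ hyIcc hclose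
      have hKx : KF b x = Aseq b x n + b^n*(cseq b x n * Int.fract ((2:ℝ)^n*x)
          + KF b (Int.fract ((2:ℝ)^n*x))) := by
        conv_lhs => rw [hxeq]
        exact hdec_t
      rw [hdec_s, hKx] at hKy
      have hbn : (0:ℝ) < b^n := by positivity
      have h2 : b^n * (cseq b x n * s + KF b s) ≤
          b^n * (cseq b x n * Int.fract ((2:ℝ)^n*x) + KF b (Int.fract ((2:ℝ)^n*x))) := by
        linarith [hKy]
      have h3 := le_of_mul_le_mul_left h2 hbn
      linarith
    have hgood : ∃ m, n0 ≤ m ∧ -1 ≤ cseq b x m ∧ cseq b x m ≤ 1 := by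
      by_contra hcon
      push_neg at hcon
      have hout : ∀ m, n0 ≤ m → cseq b x m < -1 ∨ 1 < cseq b x m := by
        intro m hm
        rcases lt_or_ge (cseq b x m) (-1) with h | h
        · exact Or.inl h
        · exact Or.inr (hcon m hm h)
      have hstepP : ∀ n, n0 ≤ n → 1 < cseq b x n →
          (1 < cseq b x (n+1) ∧ cseq b x (n+1) ≤ cseq b x n - 1) := by
        intro n hn hc
        have hforce := right_forcing hbh hb1 hc (le_of_lt (ht0 n)) (le_of_lt (ht1 n)) (hX n hn)
        have hnc : ¬ (Int.fract ((2:ℝ)^n*x) < 1/2) := not_lt.2 (le_of_lt hforce)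
        have hceq : cseq b x (n+1) = (cseq b x n - 1)/(2*b) := by rw [cseq, if_neg hnc]
        have h2b : (1:ℝ) < 2*b := by linarith
        have hge0 : 0 ≤ cseq b x (n+1) := by
          rw [hceq]; apply div_nonneg (by linarith) (by linarith)
        constructor
        · rcases hout (n+1) (by omega) with h | h
          · linarith
          · exact h
        · rw [hceq, div_le_iff₀ (by linarith)]
          nlinarith
      have hstepN : ∀ n, n0 ≤ n → cseq b x n < -1 →
          (cseq b x (n+1) < -1 ∧ cseq b x n + 1 ≤ cseq b x (n+1)) := by
        intro n hn hc
        have hforce := left_forcing hbh hb1 hc (le_of_lt (ht0 n)) (le_of_lt (ht1 n)) (hX n hn)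
        have hceq : cseq b x (n+1) = (cseq b x n + 1)/(2*b) := by rw [cseq, if_pos hforce]
        have h2b : (1:ℝ) < 2*b := by linarith
        have hle0 : cseq b x (n+1) ≤ 0 := by
          rw [hceq]
          apply div_nonpos_of_nonpos_of_nonneg (by linarith) (by linarith)
        constructor
        · rcases hout (n+1) (by omega) with h | h
          · exact h
          · linarith
        · rw [hceq, le_div_iff₀ (by linarith)]
          nlinarith
      rcases hout n0 le_rfl with hneg | hpos
      · have hind : ∀ k : ℕ, cseq b x (n0+k) < -1 ∧ cseq b x n0 + k ≤ cseq b x (n0+k) := by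
          intro k
          induction k with
          | zero => exact ⟨hneg, by simp⟩
          | succ k ihk =>
            have := hstepN (n0+k) (by omega) ihk.1
            constructor
            · rw [show n0+(k+1) = (n0+k)+1 from rfl]
              exact this.1
            · rw [show n0+(k+1) = (n0+k)+1 from rfl]
              push_cast
              have := this.2
              have := ihk.2
              push_cast at this ⊢
              linarith
        obtain ⟨K, hKgt⟩ := exists_nat_gt (-1 - cseq b x n0)
        have := hind K
        linarith [this.1, this.2]
      · have hind : ∀ k : ℕ, 1 < cseq b x (n0+k) ∧ cseq b x (n0+k) ≤ cseq b x n0 - k := by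
          intro k
          induction k with
          | zero => exact ⟨hpos, by simp⟩
          | succ k ihk =>
            have := hstepP (n0+k) (by omega) ihk.1
            constructor
            · rw [show n0+(k+1) = (n0+k)+1 from rfl]
              exact this.1
            · rw [show n0+(k+1) = (n0+k)+1 from rfl]
              push_cast
              have h2 := this.2
              have h3 := ihk.2
              push_cast at h3 ⊢
              linarith
        obtain ⟨K, hKgt⟩ := exists_nat_gt (cseq b x n0 - 1)
        have := hind K
        linarith [this.1, this.2]
    obtain ⟨m, hm, hcm1, hcm2⟩ := hgood
    have hcls := classify hbh hb1 hcm1 hcm2 (le_of_lt (ht0 m)) (le_of_lt (ht1 m)) (hX m hm)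
    have hxeq : x = ((⌊(2:ℝ)^m*x⌋:ℝ) + Int.fract ((2:ℝ)^m*x))/2^m := by
      rw [htn' m]
      field_simp; ring
    set Kn : ℕ := (⌊(2:ℝ)^m*x⌋).toNat with hKn
    have hKcast : ((Kn:ℕ):ℝ) = (⌊(2:ℝ)^m*x⌋ : ℝ) := by
      rw [hKn]
      exact_mod_cast congrArg (fun z : ℤ => (z:ℝ)) (Int.toNat_of_nonneg (hfl0 m))
    have h2m : (0:ℝ) < 2^m := by positivity
    rcases hcls with h | h | h | h
    · refine ⟨Kn, m, Or.inl ?_⟩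
      rw [hxeq, h, ← hKcast]
      field_simp
    · refine ⟨Kn, m, Or.inr ?_⟩
      rw [hxeq, h, ← hKcast]
      field_simp
    · refine ⟨2*Kn+1, m+1, Or.inr ?_⟩
      rw [hxeq, h, ← hKcast]
      push_cast
      field_simp
      ring
    · refine ⟨2*Kn, m+1, Or.inl ?_⟩
      rw [hxeq, h, ← hKcast]
      push_cast
      field_simp
      ring

lemma Knopp_eq (α x : ℝ) : Knopp α x = KF ((2:ℝ)^(-α)) x := by
  apply tsum_congr
  intro j
  congr 1
  rw [← Real.rpow_natCast ((2:ℝ)^(-α)) j, ← Real.rpow_mul (by norm_num : (0:ℝ) ≤ 2)]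
  congr 1
  ring

end KnoppPf

theorem knopp_local_maxima (α : ℝ) (hα : 0 < α) (hα1 : α < 1) :
    ∀ x ∈ Set.Ioo (0:ℝ) 1,
      ((∃ ε > 0, ∀ y ∈ Set.Icc (0:ℝ) 1, |y - x| < ε → Knopp α y ≤ Knopp α x) ↔ inS x) := by
  intro x hx
  set b : ℝ := (2:ℝ)^(-α) with hbdef
  have hb1 : b < 1 := Real.rpow_lt_one_of_one_lt_of_neg (by norm_num) (by linarith)
  have hbh : 1/2 < b := by
    have h1 : (2:ℝ)^(-1:ℝ) < (2:ℝ)^(-α) :=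
      (Real.rpow_lt_rpow_left_iff (by norm_num : (1:ℝ) < 2)).2 (by linarith)
    have h2 : (2:ℝ)^(-1:ℝ) = 1/2 := by
      rw [Real.rpow_neg (by norm_num), Real.rpow_one]
      norm_num
    rw [hbdef, ← h2]
    exact h1
  have hK : ∀ y : ℝ, Knopp α y = KnoppPf.KF b y := fun y => KnoppPf.Knopp_eq α y
  constructor
  · rintro ⟨ε, hε, hmax⟩
    refine ⟨?_, hx⟩
    apply KnoppPf.forward hbh hb1 x hx.1 hx.2 ε hε
    intro y hy hcl
    have := hmax y hy hcl
    rwa [hK, hK] at this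
  · rintro ⟨⟨k, N, hform⟩, _⟩
    obtain ⟨ε, hε, hmax⟩ := KnoppPf.backward hbh hb1 x k N hform
    refine ⟨ε, hε, ?_⟩
    intro y hy hcl
    rw [hK, hK]
    exact hmax y hy hcl
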